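/- Let b > 1. Then the equation 1 + φ(1 + √(1 + 2/φ)) = b·exp(−2/(1 + √(1 + 2/φ))) admits a unique positive root φ^crit. -/

import Mathlib

theorem stmt_4 (b : ℝ) (hb : 1 < b) :
    ∃! φ : ℝ, 0 < φ ∧
      1 + φ * (1 + Real.sqrt (1 + 2 / φ)) =
        b * Real.exp (-(2 / (1 + Real.sqrt (1 + 2 / φ)))) := by
  obtain ⟨s, hs⟩ : ∃ s : ℝ → ℝ, ∀ φ, s φ = 1 + Real.sqrt (1 + 2 / φ) :=
    ⟨_, fun _ => rfl⟩
  obtain ⟨F, hF⟩ : ∃ F : ℝ → ℝ,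
      ∀ φ, F φ = 1 + φ * s φ - b * Real.exp (-(2 / s φ)) :=
    ⟨_, fun _ => rfl⟩
  have hbpos : (0:ℝ) < b := by linarith
  -- basic facts on s
  have hs_gt : ∀ φ : ℝ, 0 < φ → 2 < s φ := by
    intro φ hφ
    have h1 : (1:ℝ) < 1 + 2 / φ := by
      have : 0 < 2 / φ := by positivity
      linarith
    rw [hs]
    nlinarith [Real.sq_sqrt (by linarith : (0:ℝ) ≤ 1 + 2/φ),
      Real.sqrt_nonneg (1 + 2/φ)]
  have hs_pos : ∀ φ : ℝ, 0 < φ → 0 < s φ := fun φ hφ => by linarith [hs_gt φ hφ]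
  -- product rewrite
  have hL : ∀ φ : ℝ, 0 < φ →
      φ * s φ = φ + Real.sqrt (φ^2 + 2*φ) := by
    intro φ hφ
    rw [hs, mul_add, mul_one]
    congr 1
    rw [← Real.sqrt_sq hφ.le, ← Real.sqrt_mul (sq_nonneg φ)]
    congr 1
    rw [Real.sqrt_sq hφ.le]
    field_simp
  -- strict monotonicity
  have hmono : StrictMonoOn F (Set.Ioi 0) := by
    intro x hx y hy hxy
    simp only [Set.mem_Ioi] at hx hy
    have h1 : Real.sqrt (x^2 + 2*x) < Real.sqrt (y^2 + 2*y) :=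
      Real.sqrt_lt_sqrt (by positivity) (by nlinarith)
    have h2 : s y < s x := by
      have hd : 2 / y < 2 / x := by
        apply div_lt_div_of_pos_left <;> linarith
      have : Real.sqrt (1 + 2 / y) < Real.sqrt (1 + 2 / x) :=
        Real.sqrt_lt_sqrt (by positivity) (by linarith)
      rw [hs x, hs y]; linarith
    have h3 : 2 / s x < 2 / s y := by
      apply div_lt_div_of_pos_left <;> [norm_num; exact hs_pos y hy; exact h2]
    have h4 : Real.exp (-(2 / s y)) < Real.exp (-(2 / s x)) :=
      Real.exp_lt_exp.mpr (by linarith)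
    have h5 : b * Real.exp (-(2 / s y)) < b * Real.exp (-(2 / s x)) :=
      mul_lt_mul_of_pos_left h4 hbpos
    rw [hF x, hF y, hL x hx, hL y hy]
    linarith
  -- negative point
  set t : ℝ := (b - 1) / (2 * (b + 2)) with ht
  have htpos : 0 < t := by
    rw [ht]; apply div_pos <;> linarith
  have htlt : t < 1/2 := by
    rw [ht, div_lt_iff₀ (by linarith)]
    linarith
  set φ₀ : ℝ := t^2 / 2 with hφ₀
  have hφ₀pos : 0 < φ₀ := by positivity
  have hsqrt2φ₀ : Real.sqrt (2 * φ₀) = t := by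
    rw [hφ₀, show 2 * (t^2/2) = t^2 by ring, Real.sqrt_sq htpos.le]
  have hFneg : F φ₀ < 0 := by
    have hup : Real.sqrt (φ₀^2 + 2*φ₀) ≤ φ₀ + t := by
      rw [← hsqrt2φ₀]
      have hle : φ₀^2 + 2*φ₀ ≤ (φ₀ + Real.sqrt (2*φ₀))^2 := by
        have := Real.sq_sqrt (by positivity : (0:ℝ) ≤ 2*φ₀)
        nlinarith [Real.sqrt_nonneg (2*φ₀)]
      calc Real.sqrt (φ₀^2 + 2*φ₀) ≤ Real.sqrt ((φ₀ + Real.sqrt (2*φ₀))^2) :=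
              Real.sqrt_le_sqrt hle
        _ = φ₀ + Real.sqrt (2*φ₀) := Real.sqrt_sq (by positivity)
    have hLHS : φ₀ * s φ₀ ≤ 2*φ₀ + t := by
      rw [hL φ₀ hφ₀pos]; linarith
    have hslow : 2 / t < s φ₀ := by
      have h2φ : 2 / φ₀ = (2/t)^2 := by
        rw [hφ₀]; field_simp
      have hge : Real.sqrt ((2/t)^2) ≤ Real.sqrt (1 + 2/φ₀) :=
        Real.sqrt_le_sqrt (by rw [h2φ]; linarith)
      rw [Real.sqrt_sq (by positivity)] at hge
      rw [hs]; linarith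
    have h2st : 2 / s φ₀ < t := by
      rw [div_lt_iff₀ (hs_pos φ₀ hφ₀pos)]
      calc (2:ℝ) = t * (2/t) := by field_simp
        _ < t * s φ₀ := mul_lt_mul_of_pos_left hslow htpos
    have hexp : 1 - t < Real.exp (-(2 / s φ₀)) := by
      have := Real.add_one_le_exp (-(2 / s φ₀))
      linarith
    have hRHS : b * (1 - t) < b * Real.exp (-(2 / s φ₀)) :=
      mul_lt_mul_of_pos_left hexp hbpos
    have hkey : (2 + b) * t = (b - 1) / 2 := by
      rw [ht]; field_simp; ring
    have harith : 1 + 2*φ₀ + t ≤ b * (1 - t) := by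
      rw [hφ₀]; nlinarith
    rw [hF]
    linarith
  -- positive point: F b > 0
  have hFpos : 0 < F b := by
    have h1 : 0 ≤ 2 / s b := (div_pos (by norm_num) (hs_pos b hbpos)).le
    have hexp : Real.exp (-(2 / s b)) ≤ 1 := by
      rw [Real.exp_le_one_iff]; linarith
    have h2 : b * Real.exp (-(2 / s b)) ≤ b := by nlinarith
    have h3 : b * s b > 2 * b := by nlinarith [hs_gt b hbpos]
    rw [hF]
    linarith
  have hφ₀lt : φ₀ < b := by
    have : φ₀ < 1 := by rw [hφ₀]; nlinarith
    linarith
  -- continuity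
  have hcont : ContinuousOn F (Set.Icc φ₀ b) := by
    have hFe : F = fun φ => 1 + φ * s φ - b * Real.exp (-(2 / s φ)) :=
      funext hF
    have hse : s = fun φ => 1 + Real.sqrt (1 + 2 / φ) := funext hs
    rw [hFe, hse]
    have hne : ∀ x ∈ Set.Icc φ₀ b, x ≠ 0 := fun x hx => by
      have := hx.1; intro h; rw [h] at this; linarith
    have hsc : ContinuousOn (fun φ : ℝ => 1 + Real.sqrt (1 + 2 / φ))
        (Set.Icc φ₀ b) := by
      apply ContinuousOn.add continuousOn_const
      exact Real.continuous_sqrt.comp_continuousOn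
        (ContinuousOn.add continuousOn_const
          (ContinuousOn.div continuousOn_const continuousOn_id hne))
    have hsne : ∀ x ∈ Set.Icc φ₀ b, (1 + Real.sqrt (1 + 2 / x)) ≠ 0 :=
      fun x hx => by
        have hx0 : 0 < x := lt_of_lt_of_le hφ₀pos hx.1
        have := hs_pos x hx0
        rw [hs] at this
        exact this.ne'
    apply ContinuousOn.sub
    · exact ContinuousOn.add continuousOn_const
        (ContinuousOn.mul continuousOn_id hsc)
    · exact ContinuousOn.mul continuousOn_const
        (Real.continuous_exp.comp_continuousOn
          ((ContinuousOn.div continuousOn_const hsc hsne).neg))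
  -- IVT
  obtain ⟨c, hc, hFc⟩ : ∃ c ∈ Set.Icc φ₀ b, F c = 0 :=
    intermediate_value_Icc hφ₀lt.le hcont ⟨hFneg.le, hFpos.le⟩
  have hcpos : 0 < c := lt_of_lt_of_le hφ₀pos hc.1
  refine ⟨c, ⟨hcpos, ?_⟩, ?_⟩
  · have h := hFc
    rw [hF, hs] at h
    linarith
  · rintro y ⟨hy, hyeq⟩
    have hFy : F y = 0 := by
      rw [hF, hs]
      linarith [hyeq]
    exact hmono.injOn (Set.mem_Ioi.mpr hy) (Set.mem_Ioi.mpr hcpos)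
      (hFy.trans hFc.symm)
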